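/- For every k ≥ 0 the inclusions PC_k ⊂ UC_k ⊂ PC_{k+1} hold and are strict, where PC_k is the class of clause-sets with propagation-hardness at most k and UC_k is the class of clause-sets with hardness at most k. -/

import Mathlib

open scoped Classical

noncomputable section

abbrev Var : Type := ℕ
abbrev Lit : Type := Var × Bool
abbrev Clause : Type := Finset Lit
abbrev ClauseSet : Type := Finset Clause

/-- A proper clause contains no complementary pair of literals. -/
def isClause (C : Clause) : Prop := ∀ v : Var, ¬((v, true) ∈ C ∧ (v, false) ∈ C)

/-- The set of variables occurring in a clause-set. -/
def clsVars (F : ClauseSet) : Finset Var := F.sup (fun C => C.image Prod.fst)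

def clauseSat (a : Var → Bool) (C : Clause) : Prop := ∃ l ∈ C, a l.1 = l.2

def cnfSat (a : Var → Bool) (F : ClauseSet) : Prop := ∀ C ∈ F, clauseSat a C

def sat (F : ClauseSet) : Prop := ∃ a : Var → Bool, cnfSat a F

/-- A literal `x` is forced for `F` iff every satisfying total assignment of `F`
makes `x` true (equivalently, assigning `x` to 0 yields an unsatisfiable clause-set). -/
def forcedLit (F : ClauseSet) (x : Lit) : Prop :=
  ∀ a : Var → Bool, cnfSat a F → a x.1 = x.2

/-- Application `φ * F` of a partial assignment: clauses containing a literal set to 1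
are removed, and literals set to 0 are removed from the remaining clauses. -/
def applyPA (φ : Var → Option Bool) (F : ClauseSet) : ClauseSet :=
  (F.filter (fun C => ¬ ∃ l ∈ C, φ l.1 = some l.2)).image
    (fun C => C.filter (fun l => φ l.1 ≠ some (!l.2)))

/-- Assigning the single literal `x` to true (`⟨x → 1⟩ * F`): clauses containing `x`
are removed, and the complementary literal is removed from the remaining clauses. -/
def asgLit (x : Lit) (F : ClauseSet) : ClauseSet :=
  (F.filter (fun C => x ∉ C)).image (fun C => C.erase (x.1, !x.2))

/-- The reduction `r_0`: detect the empty clause. -/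
def r0 (F : ClauseSet) : ClauseSet := if (∅ : Clause) ∈ F then {(∅ : Clause)} else F

/-- Fueled version of the reductions `r_k` (generalised unit-clause propagation):
`r_0` detects the empty clause; `r_{k+1}(F) = r_{k+1}(⟨x→1⟩ * F)` whenever there
is a literal `x` of `F` with `r_k(⟨x→0⟩ * F) = {⊥}`, and otherwise `r_{k+1}(F) = F`.
The fuel (first argument) makes the recursion structural: since every assignment
removes a variable, fuel `n(F) + 1` always suffices. -/
def rkAux : ℕ → ℕ → ClauseSet → ClauseSet
  | _, 0, F => r0 F
  | 0, _ + 1, F => r0 F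
  | fuel + 1, k + 1, F =>
      if h : ∃ x : Lit, x.1 ∈ clsVars F ∧
          rkAux fuel k (asgLit (x.1, !x.2) F) = {(∅ : Clause)} then
        rkAux fuel (k + 1) (asgLit h.choose F)
      else F

/-- The reduction `r_k` (generalised unit-clause propagation at level `k`);
`r_1` is unit-clause propagation, `r_2` is failed-literal elimination. -/
def rk (k : ℕ) (F : ClauseSet) : ClauseSet := rkAux ((clsVars F).card + 1) k F

/-- `φ` is a partial assignment with variables in `V`. -/
def PAover (V : Set Var) (φ : Var → Option Bool) : Prop :=
  {v | φ v ≠ none}.Finite ∧ ∀ v : Var, φ v ≠ none → v ∈ V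

/-- `hd^V(F) ≤ k`: for every partial assignment `φ` over `V` with `φ * F`
unsatisfiable, `r_k(φ * F) = {⊥}`. -/
def hdLe (k : ℕ) (V : Set Var) (F : ClauseSet) : Prop :=
  ∀ φ : Var → Option Bool, PAover V φ →
    ¬ sat (applyPA φ F) → rk k (applyPA φ F) = {(∅ : Clause)}

/-- The relative hardness `hd^V(F)`. -/
def hdV (V : Set Var) (F : ClauseSet) : ℕ := sInf {k | hdLe k V F}

/-- `phd^V(F) ≤ k`: for every partial assignment `φ` over `V`, if `φ * F` is
unsatisfiable then `r_k(φ * F) = {⊥}`, and if `φ * F` is satisfiable then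
`r_k(φ * F)` has no forced literal whose variable is in `V`. -/
def phdLe (k : ℕ) (V : Set Var) (F : ClauseSet) : Prop :=
  ∀ φ : Var → Option Bool, PAover V φ →
    (¬ sat (applyPA φ F) → rk k (applyPA φ F) = {(∅ : Clause)}) ∧
    (sat (applyPA φ F) →
      ∀ x : Lit, x.1 ∈ V → ¬ forcedLit (rk k (applyPA φ F)) x)

/-- The relative propagation-hardness `phd^V(F)`. -/
def phdV (V : Set Var) (F : ClauseSet) : ℕ := sInf {k | phdLe k V F}

/-- Absolute hardness: `hd(F) = hd^{var(F)}(F)`. -/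
def hd (F : ClauseSet) : ℕ := hdV (↑(clsVars F)) F

/-- Absolute propagation-hardness: `phd(F) = phd^{var(F)}(F)`. -/
def phd (F : ClauseSet) : ℕ := phdV (↑(clsVars F)) F

/-- The class `UC_k` of clause-sets of hardness at most `k`. -/
def UC (k : ℕ) : Set ClauseSet := {F | (∀ C ∈ F, isClause C) ∧ hd F ≤ k}

/-- The class `PC_k` of clause-sets of propagation-hardness at most `k`. -/
def PC (k : ℕ) : Set ClauseSet := {F | (∀ C ∈ F, isClause C) ∧ phd F ≤ k}


section Aux

variable {F G : ClauseSet} {C : Clause} {x y z : Lit} {v : Var} {b c : Bool} {a : Var → Bool}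
variable {k m n f : ℕ}

lemma mem_clsVars_of (hC : C ∈ F) (h : (v, b) ∈ C) : v ∈ clsVars F := by
  simp only [clsVars, Finset.mem_sup, Finset.mem_image]
  exact ⟨C, hC, (v, b), h, rfl⟩

lemma exists_of_mem_clsVars (h : v ∈ clsVars F) : ∃ C ∈ F, ∃ b, (v, b) ∈ C := by
  simp only [clsVars, Finset.mem_sup, Finset.mem_image] at h
  obtain ⟨C, hC, l, hl, hv⟩ := h
  exact ⟨C, hC, l.2, by rw [← hv]; simpa using hl⟩

lemma clause_eq_empty_of (h : clsVars F = ∅) (hC : C ∈ F) : C = ∅ := by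
  ext l
  simp only [Finset.notMem_empty, iff_false]
  intro hl
  have := mem_clsVars_of (v := l.1) (b := l.2) hC (by simpa using hl)
  simp [h] at this

lemma mem_asgLit {C' : Clause} :
    C' ∈ asgLit y F ↔ ∃ C, (C ∈ F ∧ y ∉ C) ∧ C' = C.erase (y.1, !y.2) := by
  simp only [asgLit, Finset.mem_image, Finset.mem_filter]
  constructor
  · rintro ⟨C, h1, h2⟩; exact ⟨C, h1, h2.symm⟩
  · rintro ⟨C, h1, h2⟩; exact ⟨C, h1, h2.symm⟩

lemma clsVars_asgLit_subset : clsVars (asgLit y F) ⊆ (clsVars F).erase y.1 := by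
  intro v hv
  obtain ⟨C', hC', b, hb⟩ := exists_of_mem_clsVars hv
  rw [mem_asgLit] at hC'
  obtain ⟨C, ⟨hCF, hyC⟩, rfl⟩ := hC'
  rw [Finset.mem_erase] at hb
  refine Finset.mem_erase.2 ⟨?_, mem_clsVars_of hCF hb.2⟩
  rintro rfl
  by_cases hb2 : b = y.2
  · refine hyC ?_
    have hy : y = (y.1, b) := by rw [hb2]
    rw [hy]; exact hb.2
  · exact hb.1 (by rw [Bool.eq_not_of_ne hb2])

lemma card_asgLit_lt (h : y.1 ∈ clsVars F) :
    (clsVars (asgLit y F)).card < (clsVars F).card := by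
  calc (clsVars (asgLit y F)).card ≤ ((clsVars F).erase y.1).card :=
        Finset.card_le_card clsVars_asgLit_subset
    _ < (clsVars F).card := Finset.card_erase_lt_of_mem h

lemma clsVars_asgLit_subset' : clsVars (asgLit y F) ⊆ clsVars F :=
  clsVars_asgLit_subset.trans (Finset.erase_subset _ _)

lemma asgLit_of_not_mem (h : y.1 ∉ clsVars F) : asgLit y F = F := by
  have h1 : ∀ C ∈ F, y ∉ C := fun C hC hy => h (mem_clsVars_of hC (by simpa using hy))
  have h2 : ∀ C ∈ F, (y.1, !y.2) ∉ C := fun C hC hy => h (mem_clsVars_of hC hy)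
  rw [asgLit, Finset.filter_true_of_mem h1]
  have : ∀ C ∈ F, C.erase (y.1, !y.2) = C := fun C hC => Finset.erase_eq_of_notMem (h2 C hC)
  calc F.image (fun C => C.erase (y.1, !y.2)) = F.image id := Finset.image_congr fun C hC => this C hC
    _ = F := Finset.image_id

lemma empty_mem_asgLit (h : (∅ : Clause) ∈ F) : (∅ : Clause) ∈ asgLit y F :=
  mem_asgLit.2 ⟨∅, ⟨h, by simp⟩, by simp⟩

lemma asgLit_comm (h : x.1 ≠ y.1) : asgLit x (asgLit y F) = asgLit y (asgLit x F) := by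
  have key : ∀ (u w : Lit), u.1 ≠ w.1 → ∀ C' : Clause,
      (C' ∈ asgLit u (asgLit w F) ↔
        ∃ C, (C ∈ F ∧ w ∉ C ∧ u ∉ C) ∧ C' = (C.erase (w.1, !w.2)).erase (u.1, !u.2)) := by
    intro u w huw C'
    rw [mem_asgLit]
    constructor
    · rintro ⟨D, ⟨hD, huD⟩, rfl⟩
      rw [mem_asgLit] at hD
      obtain ⟨C, ⟨hCF, hwC⟩, rfl⟩ := hD
      refine ⟨C, ⟨hCF, hwC, fun huC => huD (Finset.mem_erase.2 ⟨?_, huC⟩)⟩, rfl⟩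
      intro he; exact huw (by rw [he])
    · rintro ⟨C, ⟨hCF, hwC, huC⟩, rfl⟩
      refine ⟨C.erase (w.1, !w.2), ⟨mem_asgLit.2 ⟨C, ⟨hCF, hwC⟩, rfl⟩, ?_⟩, rfl⟩
      intro hu; exact huC (Finset.mem_of_mem_erase hu)
  ext C'
  rw [key x y h C', key y x (Ne.symm h) C']
  constructor
  · rintro ⟨C, ⟨h1, h2, h3⟩, rfl⟩
    exact ⟨C, ⟨h1, h3, h2⟩, by rw [Finset.erase_right_comm]⟩
  · rintro ⟨C, ⟨h1, h2, h3⟩, rfl⟩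
    exact ⟨C, ⟨h1, h3, h2⟩, by rw [Finset.erase_right_comm]⟩

lemma cnfSat_congr {a' : Var → Bool} (h : ∀ w ∈ clsVars F, a w = a' w)
    (ha : cnfSat a F) : cnfSat a' F := by
  intro C hC
  obtain ⟨l, hl, hal⟩ := ha C hC
  exact ⟨l, hl, by rw [← h l.1 (mem_clsVars_of hC (by simpa using hl))]; exact hal⟩

lemma cnfSat_update_iff (h : v ∉ clsVars F) :
    cnfSat (Function.update a v c) F ↔ cnfSat a F := by
  constructor
  · exact cnfSat_congr fun w hw => (Function.update_of_ne (fun he => h (by rw [← he]; exact hw)) _ _)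
  · exact cnfSat_congr fun w hw =>
      (Function.update_of_ne (fun he => h (by rw [← he]; exact hw)) _ _).symm

lemma cnfSat_asgLit (h : cnfSat a F) (hy : a y.1 = y.2) : cnfSat a (asgLit y F) := by
  intro C' hC'
  rw [mem_asgLit] at hC'
  obtain ⟨C, ⟨hCF, _⟩, rfl⟩ := hC'
  obtain ⟨l, hl, hal⟩ := h C hCF
  refine ⟨l, Finset.mem_erase.2 ⟨?_, hl⟩, hal⟩
  rintro rfl
  simp only at hal
  rw [hy] at hal; exact absurd hal.symm (Bool.not_ne_self y.2)

lemma cnfSat_of_asgLit (h : cnfSat a (asgLit y F)) (hy : a y.1 = y.2) : cnfSat a F := by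
  intro C hC
  by_cases hyC : y ∈ C
  · exact ⟨y, hyC, hy⟩
  · obtain ⟨l, hl, hal⟩ := h _ (mem_asgLit.2 ⟨C, ⟨hC, hyC⟩, rfl⟩)
    exact ⟨l, Finset.mem_of_mem_erase hl, hal⟩

lemma sat_of_sat_asgLit (h : sat (asgLit y F)) : sat F := by
  obtain ⟨a, ha⟩ := h
  have hv : y.1 ∉ clsVars (asgLit y F) := fun hm =>
    (Finset.mem_erase.1 (clsVars_asgLit_subset hm)).1 rfl
  have ha' : cnfSat (Function.update a y.1 y.2) (asgLit y F) := (cnfSat_update_iff hv).2 ha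
  exact ⟨_, cnfSat_of_asgLit ha' (Function.update_self _ _ _)⟩

lemma empty_not_mem_of_sat (h : cnfSat a F) : (∅ : Clause) ∉ F := by
  intro he
  obtain ⟨l, hl, _⟩ := h ∅ he
  simp at hl

end Aux


section RefTheory

variable {F G : ClauseSet} {x y z : Lit} {v : Var} {b : Bool} {a : Var → Bool}
variable {k m n f : ℕ}

/-- Choice-free inductive characterisation of `r_k(F) = {⊥}`. -/
inductive Ref : ℕ → ClauseSet → Prop where
  | base (k : ℕ) (F : ClauseSet) : (∅ : Clause) ∈ F → Ref k F
  | step (k : ℕ) (F : ClauseSet) (x : Lit) : x.1 ∈ clsVars F →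
      Ref k (asgLit (x.1, !x.2) F) → Ref (k + 1) (asgLit x F) → Ref (k + 1) F

lemma Ref.succ (h : Ref k F) : Ref (k + 1) F := by
  induction h with
  | base k F h => exact Ref.base _ _ h
  | step k F x hx h1 h2 ih1 ih2 => exact Ref.step k.succ F x hx ih1 ih2

lemma Ref.mono (h : Ref k F) (hk : k ≤ m) : Ref m F := by
  induction hk with
  | refl => exact h
  | step _ ih => exact ih.succ

lemma Ref.asg (h : Ref k F) : ∀ y : Lit, Ref k (_root_.asgLit y F) := by
  induction h with
  | base k F h => exact fun y => Ref.base _ _ (empty_mem_asgLit h)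
  | step k F x hx h1 h2 ih1 ih2 =>
    intro y
    by_cases hvy : y.1 ∈ clsVars F
    swap
    · rw [asgLit_of_not_mem hvy]; exact Ref.step k F x hx h1 h2
    by_cases hxy : x.1 = y.1
    · -- same variable
      by_cases hb : x.2 = y.2
      · have hxeq : y = x := Prod.ext hxy.symm hb.symm
        rw [hxeq]; exact h2
      · have hxeq : y = (x.1, !x.2) :=
          Prod.ext hxy.symm (Bool.eq_not_of_ne (fun hh => hb hh.symm))
        rw [hxeq]; exact h1.succ
    · -- different variables
      by_cases hx' : x.1 ∈ clsVars (asgLit y F)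
      · refine Ref.step k (asgLit y F) x hx' ?_ ?_
        · rw [asgLit_comm (by simpa using hxy)]; exact ih1 y
        · rw [asgLit_comm hxy]; exact ih2 y
      · have h3 := ih2 y
        rw [← asgLit_comm hxy, asgLit_of_not_mem hx'] at h3
        exact h3

lemma Ref.zero_inv (h : Ref 0 F) : (∅ : Clause) ∈ F := by
  cases h with
  | base _ _ h => exact h

lemma Ref.unsat (h : Ref k F) : ¬ sat F := by
  induction h with
  | base k F h => rintro ⟨a, ha⟩; exact empty_not_mem_of_sat ha h
  | step k F x hx h1 h2 ih1 ih2 =>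
    rintro ⟨a, ha⟩
    by_cases hax : a x.1 = x.2
    · exact ih2 ⟨a, cnfSat_asgLit ha hax⟩
    · refine ih1 ⟨a, cnfSat_asgLit ha ?_⟩
      simp only
      exact Bool.eq_not_of_ne hax

lemma Ref.of_card_unsat : ∀ n : ℕ, ∀ F : ClauseSet, (clsVars F).card ≤ n →
    ¬ sat F → Ref n F := by
  intro n
  induction n with
  | zero =>
    intro F hcard hsat
    have hne : F.Nonempty := by
      rcases Finset.eq_empty_or_nonempty F with rfl | h
      · exact absurd ⟨fun _ => true, fun C hC => absurd hC (Finset.notMem_empty C)⟩ hsat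
      · exact h
    obtain ⟨C, hC⟩ := hne
    have : C = ∅ := clause_eq_empty_of (Finset.card_eq_zero.1 (Nat.le_zero.1 hcard)) hC
    exact Ref.base 0 F (this ▸ hC)
  | succ n ih =>
    intro F hcard hsat
    by_cases hc : (clsVars F).card ≤ n
    · exact (ih F hc hsat).succ
    · have hpos : 0 < (clsVars F).card := by omega
      obtain ⟨v, hv⟩ := Finset.card_pos.1 hpos
      have hsub : ∀ b : Bool, ¬ sat (_root_.asgLit (v, b) F) := fun b hs => hsat (sat_of_sat_asgLit hs)
      have hcards : ∀ b : Bool, (clsVars (_root_.asgLit (v, b) F)).card ≤ n := by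
        intro b
        have := card_asgLit_lt (F := F) (y := (v, b)) hv
        omega
      refine Ref.step n F (v, true) hv ?_ ?_
      · exact ih _ (hcards false) (hsub false)
      · exact (ih _ (hcards true) (hsub true)).succ

lemma rkAux_k0 : rkAux f 0 F = r0 F := by cases f <;> rfl

lemma rkAux_f0 : rkAux 0 k F = r0 F := by cases k <;> rfl

lemma rkAux_succ_succ :
    rkAux (f + 1) (k + 1) F =
      if h : ∃ x : Lit, x.1 ∈ clsVars F ∧
          rkAux f k (asgLit (x.1, !x.2) F) = {(∅ : Clause)} then
        rkAux f (k + 1) (asgLit h.choose F)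
      else F := rfl

lemma r0_of_empty_mem (h : (∅ : Clause) ∈ F) : r0 F = {(∅ : Clause)} := if_pos h

lemma rkAux_empty : ∀ f k : ℕ, ∀ F : ClauseSet, (∅ : Clause) ∈ F →
    rkAux f k F = {(∅ : Clause)} := by
  intro f
  induction f with
  | zero => intro k F h; rw [rkAux_f0]; exact r0_of_empty_mem h
  | succ f ih =>
    intro k F h
    cases k with
    | zero => rw [rkAux_k0]; exact r0_of_empty_mem h
    | succ k =>
      rw [rkAux_succ_succ]
      by_cases hc : ∃ x : Lit, x.1 ∈ clsVars F ∧
          rkAux f k (asgLit (x.1, !x.2) F) = {(∅ : Clause)}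
      · rw [dif_pos hc]; exact ih _ _ (empty_mem_asgLit h)
      · rw [dif_neg hc]
        -- no variables: F = {∅}
        have hv : clsVars F = ∅ := by
          by_contra hne
          obtain ⟨v, hvm⟩ := Finset.nonempty_iff_ne_empty.2 hne
          exact hc ⟨(v, true), hvm, ih _ _ (empty_mem_asgLit h)⟩
        apply Finset.Subset.antisymm
        · intro C hC
          rw [clause_eq_empty_of hv hC]; exact Finset.mem_singleton_self _
        · intro C hC; rw [Finset.mem_singleton] at hC; rw [hC]; exact h

lemma Ref.rkAux_eq : ∀ f : ℕ, ∀ k : ℕ, ∀ F : ClauseSet, Ref k F → (clsVars F).card ≤ f →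
    rkAux f k F = {(∅ : Clause)} := by
  intro f
  induction f with
  | zero =>
    intro k F h hcard
    rw [rkAux_f0]
    cases k with
    | zero => exact r0_of_empty_mem h.zero_inv
    | succ k =>
      cases h with
      | base _ _ h => exact r0_of_empty_mem h
      | step _ _ x hx h1 h2 =>
        exact absurd (Finset.card_pos.2 ⟨x.1, hx⟩) (by omega)
  | succ f ih =>
    intro k F h hcard
    cases k with
    | zero => rw [rkAux_k0]; exact r0_of_empty_mem h.zero_inv
    | succ k =>
      cases h with
      | base _ _ h => exact rkAux_empty _ _ _ h
      | step _ _ x hx h1 h2 =>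
        have hcond : ∃ x : Lit, x.1 ∈ clsVars F ∧
            rkAux f k (_root_.asgLit (x.1, !x.2) F) = {(∅ : Clause)} := by
          refine ⟨x, hx, ih k _ h1 ?_⟩
          have := card_asgLit_lt (F := F) (y := ((x.1, !x.2) : Lit)) hx
          omega
        rw [rkAux_succ_succ, dif_pos hcond]
        obtain ⟨hz1, _⟩ := hcond.choose_spec
        refine ih (k + 1) _ ((Ref.step k F x hx h1 h2).asg _) ?_
        have := card_asgLit_lt (F := F) (y := hcond.choose) hz1
        omega

lemma Ref.of_rkAux : ∀ f k : ℕ, ∀ F : ClauseSet,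
    rkAux f k F = {(∅ : Clause)} → Ref k F := by
  have hr0 : ∀ k : ℕ, ∀ F : ClauseSet, r0 F = {(∅ : Clause)} → Ref k F := by
    intro k F h
    rw [r0] at h
    split at h
    · exact Ref.base _ _ (by assumption)
    · exact Ref.base _ _ (h ▸ Finset.mem_singleton_self _)
  intro f
  induction f with
  | zero => intro k F h; rw [rkAux_f0] at h; exact hr0 k F h
  | succ f ih =>
    intro k F h
    cases k with
    | zero => rw [rkAux_k0] at h; exact hr0 0 F h
    | succ k =>
      rw [rkAux_succ_succ] at h
      split at h
      · rename_i hc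
        obtain ⟨hz1, hz2⟩ := hc.choose_spec
        exact Ref.step k F hc.choose hz1 (ih _ _ hz2) (ih _ _ h)
      · exact hr0 _ F (r0_of_empty_mem (by rw [h]; exact Finset.mem_singleton_self _))

lemma rk_eq_iff_Ref : rk k F = {(∅ : Clause)} ↔ Ref k F := by
  constructor
  · exact Ref.of_rkAux _ _ _
  · intro h; exact Ref.rkAux_eq _ _ _ h (by omega)

lemma cnfSat_rkAux : ∀ f k : ℕ, ∀ F : ClauseSet, cnfSat a F → cnfSat a (rkAux f k F) := by
  have hr0 : ∀ F : ClauseSet, cnfSat a F → cnfSat a (r0 F) := by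
    intro F h
    rw [r0, if_neg (empty_not_mem_of_sat h)]; exact h
  intro f
  induction f with
  | zero => intro k F h; rw [rkAux_f0]; exact hr0 F h
  | succ f ih =>
    intro k F h
    cases k with
    | zero => rw [rkAux_k0]; exact hr0 F h
    | succ k =>
      rw [rkAux_succ_succ]
      split
      · rename_i hc
        obtain ⟨hz1, hz2⟩ := hc.choose_spec
        have hunsat : ¬ sat (asgLit (hc.choose.1, !hc.choose.2) F) :=
          (Ref.of_rkAux _ _ _ hz2).unsat
        have hax : a hc.choose.1 = hc.choose.2 := by
          by_contra hne
          exact hunsat ⟨a, cnfSat_asgLit h (by simpa using Bool.eq_not_of_ne hne)⟩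
        exact ih _ _ (cnfSat_asgLit h hax)
      · exact h

lemma clsVars_rkAux_subset : ∀ f k : ℕ, ∀ F : ClauseSet,
    clsVars (rkAux f k F) ⊆ clsVars F := by
  have hr0 : ∀ F : ClauseSet, clsVars (r0 F) ⊆ clsVars F := by
    intro F
    rw [r0]; split
    · intro v hv
      obtain ⟨C, hC, b, hb⟩ := exists_of_mem_clsVars hv
      rw [Finset.mem_singleton] at hC
      rw [hC] at hb; simp at hb
    · exact fun v hv => hv
  intro f
  induction f with
  | zero => intro k F; rw [rkAux_f0]; exact hr0 F
  | succ f ih =>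
    intro k F
    cases k with
    | zero => rw [rkAux_k0]; exact hr0 F
    | succ k =>
      rw [rkAux_succ_succ]
      split
      · exact (ih _ _).trans clsVars_asgLit_subset'
      · exact fun v hv => hv

lemma rkAux_fix : ∀ f k : ℕ, ∀ F : ClauseSet, (clsVars F).card + 1 ≤ f →
    ∀ z : Lit, z.1 ∈ clsVars (rkAux f (k + 1) F) →
      ¬ Ref k (asgLit (z.1, !z.2) (rkAux f (k + 1) F)) := by
  intro f
  induction f with
  | zero => intro k F hf; omega
  | succ f ih =>
    intro k F hf z hz hRef
    rw [rkAux_succ_succ] at hz hRef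
    by_cases hc : ∃ x : Lit, x.1 ∈ clsVars F ∧
        rkAux f k (asgLit (x.1, !x.2) F) = {(∅ : Clause)}
    · rw [dif_pos hc] at hz hRef
      obtain ⟨hz1, _⟩ := hc.choose_spec
      have hcard := card_asgLit_lt (F := F) (y := hc.choose) hz1
      exact ih k (asgLit hc.choose F) (by omega) z hz hRef
    · rw [dif_neg hc] at hz hRef
      refine hc ⟨z, hz, ?_⟩
      refine Ref.rkAux_eq f k _ hRef ?_
      have h1 : (clsVars (asgLit ((z.1, !z.2) : Lit) F)).card < (clsVars F).card :=
        card_asgLit_lt hz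
      omega

end RefTheory


section Bridge

variable {F G : ClauseSet} {x y z : Lit} {v : Var} {b : Bool} {a : Var → Bool}
variable {φ : Var → Option Bool} {k m n f : ℕ}

lemma applyPA_none : applyPA (fun _ => none) F = F := by
  rw [applyPA]
  rw [Finset.filter_true_of_mem (by intro C hC; simp)]
  have : ∀ C ∈ F, (C.filter (fun l : Lit => (none : Option Bool) ≠ some (!l.2))) = C := by
    intro C hC
    apply Finset.filter_true_of_mem
    intro l hl
    simp
  calc F.image (fun C => C.filter (fun l : Lit => (none : Option Bool) ≠ some (!l.2)))
      = F.image id := Finset.image_congr fun C hC => this C hC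
    _ = F := Finset.image_id

lemma mem_applyPA {C' : Clause} :
    C' ∈ applyPA φ F ↔ ∃ C, (C ∈ F ∧ ¬ ∃ l ∈ C, φ l.1 = some l.2) ∧
      C' = C.filter (fun l => φ l.1 ≠ some (!l.2)) := by
  simp only [applyPA, Finset.mem_image, Finset.mem_filter]
  constructor
  · rintro ⟨C, h1, h2⟩; exact ⟨C, h1, h2.symm⟩
  · rintro ⟨C, h1, h2⟩; exact ⟨C, h1, h2.symm⟩

lemma mem_clsVars_applyPA (h : v ∈ clsVars (applyPA φ F)) :
    φ v = none ∧ v ∈ clsVars F := by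
  obtain ⟨C', hC', b, hb⟩ := exists_of_mem_clsVars h
  rw [mem_applyPA] at hC'
  obtain ⟨C, ⟨hCF, hsat⟩, rfl⟩ := hC'
  rw [Finset.mem_filter] at hb
  refine ⟨?_, mem_clsVars_of hCF hb.1⟩
  have h1 : φ v ≠ some (!b) := hb.2
  have h2 : φ v ≠ some b := fun hc => hsat ⟨(v, b), hb.1, hc⟩
  rcases hφ : φ v with _ | c
  · rfl
  · rcases Bool.eq_false_or_eq_true c with hc | hc <;> rcases Bool.eq_false_or_eq_true b with hb' | hb' <;>
      subst hc <;> subst hb' <;> simp_all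

lemma applyPA_update (hv : φ v = none) :
    applyPA (Function.update φ v (some b)) F = asgLit (v, b) (applyPA φ F) := by
  ext C'
  rw [mem_asgLit, mem_applyPA]
  have hupd : ∀ w : Var, Function.update φ v (some b) w = if w = v then some b else φ w := by
    intro w; by_cases hw : w = v
    · subst hw; simp
    · simp [Function.update_of_ne hw, hw]
  constructor
  · rintro ⟨C, ⟨hCF, hsat⟩, rfl⟩
    refine ⟨C.filter (fun l => φ l.1 ≠ some (!l.2)), ⟨mem_applyPA.2 ⟨C, ⟨hCF, ?_⟩, rfl⟩, ?_⟩, ?_⟩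
    · rintro ⟨l, hl, hφl⟩
      refine hsat ⟨l, hl, ?_⟩
      rw [hupd]
      split
      · rename_i hlv; rw [hlv] at hφl; rw [hv] at hφl; exact absurd hφl (by simp)
      · exact hφl
    · rintro hmem
      rw [Finset.mem_filter] at hmem
      exact hsat ⟨(v, b), hmem.1, by rw [hupd]; simp⟩
    · ext l
      rw [Finset.mem_erase, Finset.mem_filter, Finset.mem_filter]
      constructor
      · rintro ⟨hl, hφl⟩
        rw [hupd] at hφl
        by_cases hlv : l.1 = v
        · rw [if_pos hlv] at hφl
          have hl2 : l.2 = b := by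
            by_contra hne
            exact hφl (by rw [Bool.eq_not_of_ne hne, Bool.not_not])
          refine ⟨fun he => ?_, ⟨hl, by rw [hlv, hv]; simp⟩⟩
          rw [he] at hl2; simp at hl2
        · rw [if_neg hlv] at hφl
          exact ⟨fun he => hlv (by rw [he]), ⟨hl, hφl⟩⟩
      · rintro ⟨hne, ⟨hl, hφl⟩⟩
        refine ⟨hl, ?_⟩
        rw [hupd]
        split
        · rename_i hlv
          intro hc
          have : (!l.2) = b := by injection hc with hc'; exact hc'.symm
          refine hne ?_
          have hl2 : l.2 = !b := by rw [← this, Bool.not_not]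
          have : l = (l.1, l.2) := rfl
          rw [this, hlv, hl2]
        · exact hφl
  · rintro ⟨D, ⟨hD, hvbD⟩, rfl⟩
    rw [mem_applyPA] at hD
    obtain ⟨C, ⟨hCF, hsat⟩, rfl⟩ := hD
    refine ⟨C, ⟨hCF, ?_⟩, ?_⟩
    · rintro ⟨l, hl, hφl⟩
      rw [hupd] at hφl
      by_cases hlv : l.1 = v
      · rw [if_pos hlv] at hφl
        have hl2 : l.2 = b := by injection hφl with hc; exact hc.symm
        refine hvbD (Finset.mem_filter.2 ⟨?_, by rw [hv]; simp⟩)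
        have : l = (l.1, l.2) := rfl
        rw [← hlv, ← hl2]; exact hl
      · rw [if_neg hlv] at hφl
        exact hsat ⟨l, hl, hφl⟩
    · ext l
      rw [Finset.mem_filter, Finset.mem_erase, Finset.mem_filter]
      constructor
      · rintro ⟨hne, ⟨hl, hφl⟩⟩
        refine ⟨hl, ?_⟩
        rw [hupd]
        split
        · rename_i hlv
          intro hc
          have hl2 : l.2 = !b := by
            have : (!l.2) = b := by injection hc with hc'; exact hc'.symm
            rw [← this, Bool.not_not]
          refine hne ?_
          have : l = (l.1, l.2) := rfl
          rw [this, hlv, hl2]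
        · exact hφl
      · rintro ⟨hl, hφl⟩
        rw [hupd] at hφl
        by_cases hlv : l.1 = v
        · rw [if_pos hlv] at hφl
          have hl2 : l.2 = b := by
            by_contra hne
            exact hφl (by rw [Bool.eq_not_of_ne hne, Bool.not_not])
          refine ⟨fun he => ?_, ⟨hl, by rw [hlv, hv]; simp⟩⟩
          rw [he] at hl2; simp at hl2
        · rw [if_neg hlv] at hφl
          exact ⟨fun he => hlv (by rw [he]), ⟨hl, hφl⟩⟩

lemma PAover_update {V : Set Var} (h : PAover V φ) (hv : v ∈ V) :
    PAover V (Function.update φ v (some b)) := by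
  constructor
  · refine Set.Finite.subset (Set.Finite.insert v h.1) ?_
    intro w hw
    simp only [Set.mem_setOf_eq] at hw
    by_cases hwv : w = v
    · exact Or.inl hwv
    · right; rw [Function.update_of_ne hwv] at hw; exact hw
  · intro w hw
    by_cases hwv : w = v
    · exact hwv ▸ hv
    · rw [Function.update_of_ne hwv] at hw; exact h.2 w hw

lemma not_forced_of_not_mem_vars (hv : x.1 ∉ clsVars G) (hs : sat G) :
    ¬ forcedLit G x := by
  intro hforced
  obtain ⟨a, ha⟩ := hs
  have ha' : cnfSat (Function.update a x.1 (!x.2)) G := (cnfSat_update_iff hv).2 ha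
  have := hforced _ ha'
  rw [Function.update_self] at this
  exact (Bool.not_ne_self x.2) this

lemma unsat_asg_of_forced (hx : forcedLit G x) : ¬ sat (asgLit (x.1, !x.2) G) := by
  rintro ⟨a, ha⟩
  have hv : x.1 ∉ clsVars (asgLit ((x.1, !x.2) : Lit) G) := fun hm =>
    (Finset.mem_erase.1 (clsVars_asgLit_subset hm)).1 rfl
  have ha' : cnfSat (Function.update a x.1 (!x.2)) (asgLit ((x.1, !x.2) : Lit) G) :=
    (cnfSat_update_iff hv).2 ha
  have hG : cnfSat (Function.update a x.1 (!x.2)) G :=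
    cnfSat_of_asgLit ha' (Function.update_self _ _ _)
  have := hx _ hG
  rw [Function.update_self] at this
  exact (Bool.not_ne_self x.2) this

lemma rkAux_applyPA_invariant : ∀ f : ℕ, ∀ k : ℕ, ∀ φ : Var → Option Bool,
    PAover (↑(clsVars F)) φ → (clsVars (applyPA φ F)).card + 1 ≤ f →
    ∃ ψ : Var → Option Bool, PAover (↑(clsVars F)) ψ ∧
      rkAux f (k + 1) (applyPA φ F) = applyPA ψ F := by
  intro f
  induction f with
  | zero => intro k φ _ h; omega
  | succ f ih =>
    intro k φ hφ hf
    rw [rkAux_succ_succ]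
    by_cases hc : ∃ x : Lit, x.1 ∈ clsVars (applyPA φ F) ∧
        rkAux f k (asgLit (x.1, !x.2) (applyPA φ F)) = {(∅ : Clause)}
    · rw [dif_pos hc]
      obtain ⟨hz1, _⟩ := hc.choose_spec
      set z := hc.choose with hzdef
      obtain ⟨hznone, hzF⟩ := mem_clsVars_applyPA hz1
      have heq : applyPA (Function.update φ z.1 (some z.2)) F = asgLit z (applyPA φ F) := by
        rw [applyPA_update hznone]
      have hφ' : PAover (↑(clsVars F)) (Function.update φ z.1 (some z.2)) :=
        PAover_update hφ (by exact_mod_cast hzF)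
      have hcard := card_asgLit_lt (F := applyPA φ F) (y := z) hz1
      obtain ⟨ψ, hψ, hres⟩ := ih k _ hφ' (by rw [heq]; omega)
      exact ⟨ψ, hψ, by rw [← heq]; exact hres⟩
    · rw [dif_neg hc]
      exact ⟨φ, hφ, rfl⟩

/-- Completeness: `phd(F) ≤ n(F)` always holds. -/
theorem phdLe_card (F : ClauseSet) : phdLe (clsVars F).card (↑(clsVars F)) F := by
  intro φ hφ
  set G := applyPA φ F with hGdef
  have hGsub : clsVars G ⊆ clsVars F := fun v hv => (mem_clsVars_applyPA hv).2
  have hGcard : (clsVars G).card ≤ (clsVars F).card := Finset.card_le_card hGsub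
  constructor
  · intro hunsat
    rw [rk_eq_iff_Ref]
    exact Ref.of_card_unsat _ _ hGcard hunsat
  · intro hsat x hxV hforced
    set G' := rk ((clsVars F).card) G with hG'def
    have hG'aux : G' = rkAux ((clsVars G).card + 1) ((clsVars F).card) G := rfl
    have hsatG' : sat G' := by
      obtain ⟨a, ha⟩ := hsat
      exact ⟨a, by rw [hG'aux]; exact cnfSat_rkAux _ _ _ ha⟩
    by_cases hxG' : x.1 ∈ clsVars G'
    swap
    · exact not_forced_of_not_mem_vars hxG' hsatG' hforced
    have hG'sub : clsVars G' ⊆ clsVars G := by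
      rw [hG'aux]; exact clsVars_rkAux_subset _ _ _
    -- (clsVars F).card is positive
    have hpos : 0 < (clsVars F).card :=
      Finset.card_pos.2 ⟨x.1, hGsub (hG'sub hxG')⟩
    obtain ⟨N, hN⟩ : ∃ N, (clsVars F).card = N + 1 := ⟨(clsVars F).card - 1, by omega⟩
    -- the reduced set is a fixpoint
    have hfix := rkAux_fix ((clsVars G).card + 1) N G (by omega) x
    rw [← hN, ← hG'aux] at hfix
    -- but assigning the complement of x is refutable at level N
    have hunsat : ¬ sat (asgLit ((x.1, !x.2) : Lit) G') := unsat_asg_of_forced hforced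
    have hcard2 : (clsVars (asgLit ((x.1, !x.2) : Lit) G')).card ≤ N := by
      have h1 := card_asgLit_lt (F := G') (y := ((x.1, !x.2) : Lit)) hxG'
      have h2 : (clsVars G').card ≤ (clsVars F).card :=
        Finset.card_le_card (hG'sub.trans hGsub)
      omega
    exact hfix hxG' (Ref.of_card_unsat N _ hcard2 hunsat)

theorem hdLe_of_phdLe {V : Set Var} (h : phdLe k V F) : hdLe k V F :=
  fun φ hφ => (h φ hφ).1

theorem phdLe_succ_of_hdLe (h : hdLe m (↑(clsVars F)) F) :
    phdLe (m + 1) (↑(clsVars F)) F := by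
  intro φ hφ
  set G := applyPA φ F with hGdef
  constructor
  · intro hunsat
    rw [rk_eq_iff_Ref]
    exact (rk_eq_iff_Ref.1 (h φ hφ hunsat)).succ
  · intro hsat x hxV hforced
    set G' := rk (m + 1) G with hG'def
    have hG'aux : G' = rkAux ((clsVars G).card + 1) (m + 1) G := rfl
    have hsatG' : sat G' := by
      obtain ⟨a, ha⟩ := hsat
      exact ⟨a, by rw [hG'aux]; exact cnfSat_rkAux _ _ _ ha⟩
    by_cases hxG' : x.1 ∈ clsVars G'
    swap
    · exact not_forced_of_not_mem_vars hxG' hsatG' hforced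
    -- G' = applyPA ψ F for some ψ over V
    obtain ⟨ψ, hψ, hres⟩ := rkAux_applyPA_invariant (F := F) ((clsVars G).card + 1) m φ hφ
      (by rw [hGdef])
    rw [← hG'aux] at hres
    have hψx : ψ x.1 = none ∧ x.1 ∈ clsVars F := mem_clsVars_applyPA (by rw [← hres]; exact hxG')
    have heq : applyPA (Function.update ψ x.1 (some (!x.2))) F = asgLit ((x.1, !x.2) : Lit) G' := by
      rw [applyPA_update hψx.1, hres]
    have hψ' : PAover (↑(clsVars F)) (Function.update ψ x.1 (some (!x.2))) :=
      PAover_update hψ (by exact_mod_cast hψx.2)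
    have hunsat : ¬ sat (asgLit ((x.1, !x.2) : Lit) G') := unsat_asg_of_forced hforced
    have hrefut := h _ hψ' (by rw [heq]; exact hunsat)
    rw [heq, rk_eq_iff_Ref] at hrefut
    exact rkAux_fix ((clsVars G).card + 1) m G (by omega) x hxG' hrefut

end Bridge


section Witness

variable {S T : Finset Var} {C D : Clause} {v : Var} {b : Bool} {a : Var → Bool}
variable {k m n : ℕ} {l : Lit}

/-- The clause over variables `S` that is positive exactly on `T`. -/
def clauseOf (S T : Finset Var) : Clause := S.image (fun v => (v, decide (v ∈ T)))

/-- `A_S`: the set of all full clauses over the variables `S`. -/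
def AA (S : Finset Var) : ClauseSet := S.powerset.image (fun T => clauseOf S T)

/-- `A_k'`: all full clauses over `{0, …, k-1}`, each extended by the literal `(k, true)`. -/
def AAp (k : ℕ) : ClauseSet :=
  (AA (Finset.range k)).image (fun C => insert ((k, true) : Lit) C)

lemma mem_clauseOf : l ∈ clauseOf S T ↔ l.1 ∈ S ∧ l.2 = decide (l.1 ∈ T) := by
  simp only [clauseOf, Finset.mem_image]
  constructor
  · rintro ⟨v, hv, rfl⟩; exact ⟨hv, rfl⟩
  · rintro ⟨h1, h2⟩; exact ⟨l.1, h1, by rw [← h2]⟩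

lemma mem_AA : C ∈ AA S ↔ ∃ T, T ⊆ S ∧ C = clauseOf S T := by
  simp only [AA, Finset.mem_image, Finset.mem_powerset]
  constructor
  · rintro ⟨T, h1, h2⟩; exact ⟨T, h1, h2.symm⟩
  · rintro ⟨T, h1, h2⟩; exact ⟨T, h1, h2.symm⟩

lemma clauseOf_mem_AA (h : T ⊆ S) : clauseOf S T ∈ AA S := mem_AA.2 ⟨T, h, rfl⟩

lemma var_mem_of_mem_AA (hC : C ∈ AA S) (hl : l ∈ C) : l.1 ∈ S := by
  obtain ⟨T, hT, rfl⟩ := mem_AA.1 hC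
  exact (mem_clauseOf.1 hl).1

lemma clsVars_AA : clsVars (AA S) = S := by
  apply Finset.Subset.antisymm
  · intro v hv
    obtain ⟨C, hC, b, hb⟩ := exists_of_mem_clsVars hv
    exact var_mem_of_mem_AA hC hb
  · intro v hv
    refine mem_clsVars_of (clauseOf_mem_AA (Finset.empty_subset S)) (b := false) ?_
    rw [mem_clauseOf]; simp [hv]

lemma clauseOf_eq_empty_iff : clauseOf S T = ∅ ↔ S = ∅ := by
  rw [clauseOf, Finset.image_eq_empty]

lemma empty_mem_AA_iff : (∅ : Clause) ∈ AA S ↔ S = ∅ := by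
  rw [mem_AA]
  constructor
  · rintro ⟨T, hT, h⟩; exact clauseOf_eq_empty_iff.1 h.symm
  · rintro rfl
    exact ⟨∅, Finset.Subset.refl _, (clauseOf_eq_empty_iff.2 rfl).symm⟩

lemma isClause_clauseOf : isClause (clauseOf S T) := by
  intro v ⟨h1, h2⟩
  rw [mem_clauseOf] at h1 h2
  simp only at h1 h2
  rw [← h2.2] at h1
  exact Bool.false_ne_true h1.2.symm

lemma isClause_AA (hC : C ∈ AA S) : isClause C := by
  obtain ⟨T, hT, rfl⟩ := mem_AA.1 hC
  exact isClause_clauseOf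

lemma clauseOf_not_sat : ¬ clauseSat a (clauseOf S (S.filter (fun v => a v = false))) := by
  rintro ⟨l, hl, hal⟩
  rw [mem_clauseOf] at hl
  obtain ⟨h1, h2⟩ := hl
  rw [h2] at hal
  rcases hav : a l.1 with _ | _
  · rw [hav] at hal
    simp only [Finset.mem_filter] at hal
    simp [h1, hav] at hal
  · rw [hav] at hal
    simp only [Finset.mem_filter] at hal
    simp [h1, hav] at hal

lemma not_sat_AA (hS : S.Nonempty) : ¬ sat (AA S) := by
  rintro ⟨a, ha⟩
  exact clauseOf_not_sat (ha _ (clauseOf_mem_AA (Finset.filter_subset _ _)))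

lemma erase_clauseOf (hv : v ∈ S) (hT : decide (v ∈ T) = !b) :
    (clauseOf S T).erase (v, !b) = clauseOf (S.erase v) (T.erase v) := by
  ext l
  rw [Finset.mem_erase, mem_clauseOf, mem_clauseOf, Finset.mem_erase]
  by_cases hlv : l.1 = v
  · constructor
    · rintro ⟨hne, h1, h2⟩
      exfalso
      refine hne ?_
      have : l = (l.1, l.2) := rfl
      rw [this, hlv, h2, hlv, hT]
    · rintro ⟨⟨hne, _⟩, _⟩; exact absurd hlv hne
  · constructor
    · rintro ⟨_, h1, h2⟩
      refine ⟨⟨hlv, h1⟩, ?_⟩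
      rw [h2, decide_eq_decide]
      simp [Finset.mem_erase, hlv]
    · rintro ⟨⟨_, h1⟩, h2⟩
      refine ⟨fun he => hlv (by rw [he]), h1, ?_⟩
      rw [h2, decide_eq_decide]
      simp [Finset.mem_erase, hlv]

lemma asgLit_AA (hv : v ∈ S) : asgLit (v, b) (AA S) = AA (S.erase v) := by
  ext C'
  rw [mem_asgLit, mem_AA]
  constructor
  · rintro ⟨C, ⟨hC, hvb⟩, rfl⟩
    obtain ⟨T, hT, rfl⟩ := mem_AA.1 hC
    have hdec : decide (v ∈ T) = !b := by
      rw [mem_clauseOf] at hvb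
      simp only [not_and] at hvb
      exact Bool.eq_not_of_ne (fun hh => (hvb hv) hh.symm)
    exact ⟨T.erase v, Finset.erase_subset_erase v hT, erase_clauseOf hv hdec⟩
  · rintro ⟨T', hT', rfl⟩
    have hvT' : v ∉ T' := fun h => (Finset.mem_erase.1 (hT' h)).1 rfl
    rcases Bool.eq_false_or_eq_true b with rfl | rfl
    · -- b = true : take T := T'
      refine ⟨clauseOf S T', ⟨clauseOf_mem_AA (hT'.trans (Finset.erase_subset v S)), ?_⟩, ?_⟩
      · rw [mem_clauseOf]
        rintro ⟨_, hb⟩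
        simp [hvT'] at hb
      · have hdec : decide (v ∈ T') = !true := by simp [hvT']
        rw [show (((v, true) : Lit).1, !((v, true) : Lit).2) = ((v, !true) : Lit) from rfl]
        rw [erase_clauseOf hv hdec, Finset.erase_eq_of_notMem hvT']
    · -- b = false : take T := insert v T'
      refine ⟨clauseOf S (insert v T'),
        ⟨clauseOf_mem_AA (Finset.insert_subset hv (hT'.trans (Finset.erase_subset v S))), ?_⟩, ?_⟩
      · rw [mem_clauseOf]
        rintro ⟨_, hb⟩
        simp at hb
      · have hdec : decide (v ∈ insert v T') = !false := by simp
        rw [show (((v, false) : Lit).1, !((v, false) : Lit).2) = ((v, !false) : Lit) from rfl]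
        rw [erase_clauseOf hv hdec, Finset.erase_insert hvT']

lemma not_Ref_AA : ∀ m : ℕ, ∀ S : Finset Var, m < S.card → ¬ Ref m (AA S) := by
  intro m
  induction m with
  | zero =>
    intro S hcard h
    have := empty_mem_AA_iff.1 h.zero_inv
    rw [this] at hcard; simp at hcard
  | succ m ih =>
    intro S hcard h
    cases h with
    | base _ _ h =>
      have := empty_mem_AA_iff.1 h
      rw [this] at hcard; simp at hcard
    | step _ _ x hx h1 h2 =>
      rw [clsVars_AA] at hx
      rw [asgLit_AA hx] at h1
      refine ih (S.erase x.1) ?_ h1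
      rw [Finset.card_erase_of_mem hx]
      omega

lemma mem_AAp : C ∈ AAp k ↔ ∃ D, D ∈ AA (Finset.range k) ∧ C = insert ((k, true) : Lit) D := by
  simp only [AAp, Finset.mem_image]
  constructor
  · rintro ⟨D, h1, h2⟩; exact ⟨D, h1, h2.symm⟩
  · rintro ⟨D, h1, h2⟩; exact ⟨D, h1, h2.symm⟩

lemma kt_mem_of_mem_AAp (h : C ∈ AAp k) : ((k, true) : Lit) ∈ C := by
  obtain ⟨D, _, rfl⟩ := mem_AAp.1 h
  exact Finset.mem_insert_self _ _

lemma var_k_not_mem_AA (hD : D ∈ AA (Finset.range k)) : ∀ b, ((k, b) : Lit) ∉ D := by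
  intro b h
  have := var_mem_of_mem_AA hD h
  simp at this

lemma kf_not_mem_of_mem_AAp (h : C ∈ AAp k) : ((k, false) : Lit) ∉ C := by
  obtain ⟨D, hD, rfl⟩ := mem_AAp.1 h
  rw [Finset.mem_insert]
  rintro (h | h)
  · simp at h
  · exact var_k_not_mem_AA hD false h

lemma clsVars_AAp : clsVars (AAp k) = Finset.range (k + 1) := by
  apply Finset.Subset.antisymm
  · intro v hv
    obtain ⟨C, hC, b, hb⟩ := exists_of_mem_clsVars hv
    obtain ⟨D, hD, rfl⟩ := mem_AAp.1 hC
    rw [Finset.mem_insert] at hb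
    rcases hb with hb | hb
    · have : v = k := congrArg Prod.fst hb
      rw [this]; simp
    · have := var_mem_of_mem_AA hD hb
      rw [Finset.mem_range] at this
      rw [Finset.mem_range]; omega
  · intro v hv
    rw [Finset.mem_range] at hv
    have hmem : insert ((k, true) : Lit) (clauseOf (Finset.range k) ∅) ∈ AAp k :=
      mem_AAp.2 ⟨_, clauseOf_mem_AA (Finset.empty_subset _), rfl⟩
    by_cases hvk : v = k
    · exact mem_clsVars_of hmem (b := true) (by rw [hvk]; exact Finset.mem_insert_self _ _)
    · have hvlt : v < k := by
        rcases Nat.lt_or_ge v k with h | h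
        · exact h
        · exact absurd (Nat.le_antisymm (Nat.lt_succ_iff.mp hv) h) hvk
      refine mem_clsVars_of hmem (b := false) (Finset.mem_insert_of_mem ?_)
      rw [mem_clauseOf]
      exact ⟨by rw [Finset.mem_range]; exact hvlt, by simp⟩

lemma sat_AAp : cnfSat (fun _ => true) (AAp k) := by
  intro C hC
  exact ⟨(k, true), kt_mem_of_mem_AAp hC, rfl⟩

lemma isClause_AAp (hC : C ∈ AAp k) : isClause C := by
  obtain ⟨D, hD, rfl⟩ := mem_AAp.1 hC
  intro v ⟨h1, h2⟩
  rw [Finset.mem_insert] at h1 h2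
  rcases h1 with h1 | h1 <;> rcases h2 with h2 | h2
  · simp at h2
  · have : v = k := congrArg Prod.fst h1
    exact var_k_not_mem_AA hD false (this ▸ h2)
  · simp at h2
  · exact isClause_AA hD v ⟨h1, h2⟩

lemma forced_AAp : forcedLit (AAp k) ((k, true) : Lit) := by
  intro a ha
  by_contra hne
  have hak : a k = false := by
    simp only at hne
    cases h : a k
    · rfl
    · exact absurd h hne
  have hmem : insert ((k, true) : Lit)
      (clauseOf (Finset.range k) ((Finset.range k).filter (fun v => a v = false))) ∈ AAp k :=
    mem_AAp.2 ⟨_, clauseOf_mem_AA (Finset.filter_subset _ _), rfl⟩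
  obtain ⟨l, hl, hal⟩ := ha _ hmem
  rw [Finset.mem_insert] at hl
  rcases hl with rfl | hl
  · simp only at hal
    rw [hak] at hal; exact Bool.false_ne_true hal
  · exact clauseOf_not_sat ⟨l, hl, hal⟩

lemma asgLit_kfalse_AAp : asgLit ((k, false) : Lit) (AAp k) = AA (Finset.range k) := by
  rw [asgLit]
  rw [Finset.filter_true_of_mem (fun C hC => kf_not_mem_of_mem_AAp hC)]
  rw [AAp, Finset.image_image]
  have : ∀ D ∈ AA (Finset.range k),
      ((insert ((k, true) : Lit) D).erase (((k : Var), false).1, !((k : Var), false).2)) = D := by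
    intro D hD
    have : (((k : Var), false).1, !((k : Var), false).2) = ((k, true) : Lit) := by simp
    rw [this, Finset.erase_insert (var_k_not_mem_AA hD true)]
  calc (AA (Finset.range k)).image _
      = (AA (Finset.range k)).image id := Finset.image_congr fun D hD => this D hD
    _ = AA (Finset.range k) := Finset.image_id

lemma asgLit_ktrue_AAp : asgLit ((k, true) : Lit) (AAp k) = ∅ := by
  rw [asgLit]
  have h0 : Finset.filter (fun C => ((k, true) : Lit) ∉ C) (AAp k) = ∅ := by
    rw [Finset.filter_eq_empty_iff]
    intro C hC h
    exact h (kt_mem_of_mem_AAp hC)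
  rw [h0, Finset.image_empty]

lemma cnfSat_empty : cnfSat a (∅ : ClauseSet) := fun C hC => absurd hC (Finset.notMem_empty C)

lemma rk_AAp_eq (hm : m ≤ k) : rk m (AAp k) = AAp k := by
  have hcard : (clsVars (AAp k)).card = k + 1 := by rw [clsVars_AAp, Finset.card_range]
  rw [rk, hcard]
  cases m with
  | zero =>
    rw [rkAux_k0, r0, if_neg]
    intro h
    have := kt_mem_of_mem_AAp h
    simp at this
  | succ m =>
    rw [rkAux_succ_succ, dif_neg]
    rintro ⟨x, hx1, hx2⟩
    have hRef : Ref m (asgLit ((x.1, !x.2) : Lit) (AAp k)) := Ref.of_rkAux _ _ _ hx2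
    rw [clsVars_AAp, Finset.mem_range] at hx1
    by_cases hxk : x.1 = k
    · rcases Bool.eq_false_or_eq_true x.2 with hb | hb
      · -- x = (k, true): assign (k, false), result A_k, not refutable at level m < k
        have hxx : ((x.1, !x.2) : Lit) = ((k, false) : Lit) := by rw [hxk, hb]; simp
        rw [hxx, asgLit_kfalse_AAp] at hRef
        exact not_Ref_AA m (Finset.range k) (by rw [Finset.card_range]; omega) hRef
      · -- x = (k, false): assign (k, true), result ∅, satisfiable
        have hxx : ((x.1, !x.2) : Lit) = ((k, true) : Lit) := by rw [hxk, hb]; simp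
        rw [hxx, asgLit_ktrue_AAp] at hRef
        exact hRef.unsat ⟨fun _ => true, cnfSat_empty⟩
    · -- x.1 < k : the result is satisfiable (by the all-true assignment)
      refine hRef.unsat ⟨fun _ => true, ?_⟩
      intro C' hC'
      obtain ⟨C, ⟨hC, _⟩, rfl⟩ := mem_asgLit.1 hC'
      refine ⟨(k, true), Finset.mem_erase.2 ⟨?_, kt_mem_of_mem_AAp hC⟩, rfl⟩
      intro he
      exact hxk (by injection he with h _; exact h.symm)

end Witness


section Final

variable {k : ℕ} {F : ClauseSet}

lemma PAover_none {V : Set Var} : PAover V (fun _ => none) := by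
  constructor
  · have : {v : Var | (fun _ => (none : Option Bool)) v ≠ none} = ∅ := by simp
    rw [this]; exact Set.finite_empty
  · intro v hv; simp at hv

lemma phd_set_nonempty (F : ClauseSet) : {j | phdLe j (↑(clsVars F)) F}.Nonempty :=
  ⟨_, phdLe_card F⟩

lemma hd_set_nonempty (F : ClauseSet) : {j | hdLe j (↑(clsVars F)) F}.Nonempty :=
  ⟨_, hdLe_of_phdLe (phdLe_card F)⟩

lemma phdLe_phd (F : ClauseSet) : phdLe (phd F) (↑(clsVars F)) F :=
  Nat.sInf_mem (phd_set_nonempty F)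

lemma hdLe_hd (F : ClauseSet) : hdLe (hd F) (↑(clsVars F)) F :=
  Nat.sInf_mem (hd_set_nonempty F)

lemma hd_le_of_hdLe (h : hdLe k (↑(clsVars F)) F) : hd F ≤ k := Nat.sInf_le h

lemma phd_le_of_phdLe (h : phdLe k (↑(clsVars F)) F) : phd F ≤ k := Nat.sInf_le h

lemma PC_subset_UC : PC k ⊆ UC k := by
  rintro F ⟨hcl, hphd⟩
  exact ⟨hcl, le_trans (hd_le_of_hdLe (hdLe_of_phdLe (phdLe_phd F))) hphd⟩

lemma UC_subset_PC : UC k ⊆ PC (k + 1) := by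
  rintro F ⟨hcl, hhd⟩
  exact ⟨hcl, le_trans (phd_le_of_phdLe (phdLe_succ_of_hdLe (hdLe_hd F)))
    (Nat.add_le_add_right hhd 1)⟩

lemma AAp_mem_UC : AAp k ∈ UC k := by
  refine ⟨fun C hC => isClause_AAp hC, hd_le_of_hdLe ?_⟩
  intro φ hφ hunsat
  rw [rk_eq_iff_Ref]
  by_cases hall : ∀ v, φ v = none
  · exfalso
    have : φ = (fun _ => none) := funext hall
    rw [this, applyPA_none] at hunsat
    exact hunsat ⟨fun _ => true, sat_AAp⟩
  · push_neg at hall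
    obtain ⟨v, hv⟩ := hall
    have hvV : v ∈ clsVars (AAp k) := by
      have := hφ.2 v hv
      exact_mod_cast this
    have hsub : clsVars (applyPA φ (AAp k)) ⊆ (clsVars (AAp k)).erase v := by
      intro w hw
      obtain ⟨hw1, hw2⟩ := mem_clsVars_applyPA hw
      refine Finset.mem_erase.2 ⟨?_, hw2⟩
      rintro rfl; exact hv hw1
    have hcard : (clsVars (applyPA φ (AAp k))).card ≤ k := by
      have h1 := Finset.card_le_card hsub
      rw [Finset.card_erase_of_mem hvV, clsVars_AAp, Finset.card_range] at h1
      omega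
    exact Ref.of_card_unsat k _ hcard hunsat

lemma AAp_not_mem_PC : AAp k ∉ PC k := by
  rintro ⟨-, hphd⟩
  have hmem := phdLe_phd (AAp k)
  have h2 := (hmem (fun _ => none) PAover_none).2
  rw [applyPA_none] at h2
  have hsat : sat (AAp k) := ⟨fun _ => true, sat_AAp⟩
  have hk : (k : Var) ∈ clsVars (AAp k) := by rw [clsVars_AAp]; simp
  have h3 := h2 hsat ((k, true) : Lit) (Finset.mem_coe.2 hk)
  rw [rk_AAp_eq hphd] at h3
  exact h3 forced_AAp

lemma AA_mem_PC : AA (Finset.range (k + 1)) ∈ PC (k + 1) := by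
  refine ⟨fun C hC => isClause_AA hC, ?_⟩
  have h := phd_le_of_phdLe (phdLe_card (AA (Finset.range (k + 1))))
  rwa [clsVars_AA, Finset.card_range] at h

lemma AA_not_mem_UC : AA (Finset.range (k + 1)) ∉ UC k := by
  rintro ⟨-, hhd⟩
  have hmem := hdLe_hd (AA (Finset.range (k + 1)))
  have h2 := hmem (fun _ => none) PAover_none
  rw [applyPA_none] at h2
  have hunsat : ¬ sat (AA (Finset.range (k + 1))) :=
    not_sat_AA (Finset.nonempty_range_iff.2 (Nat.succ_ne_zero k))
  have h3 := rk_eq_iff_Ref.1 (h2 hunsat)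
  exact not_Ref_AA _ _ (by rw [Finset.card_range]; omega) h3

end Final

/-- for every `k ≥ 0` the strict inclusions
`PC_k ⊂ UC_k ⊂ PC_{k+1}` hold. -/
theorem stmt13 (k : ℕ) : PC k ⊂ UC k ∧ UC k ⊂ PC (k + 1) := by
  constructor
  · rw [Set.ssubset_iff_of_subset PC_subset_UC]
    exact ⟨AAp k, AAp_mem_UC, AAp_not_mem_PC⟩
  · rw [Set.ssubset_iff_of_subset UC_subset_PC]
    exact ⟨AA (Finset.range (k + 1)), AA_mem_PC, AA_not_mem_UC⟩
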